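/- Stochastic expansion of the one-step GMM estimator under local misspecification: suppose g̃ = O_p(1), G̃ = O_p(1), W̃ = O_p(1), the first-order condition G_n′W_n⁻¹g_n(θ̂₁) = 0 holds with probability approaching one, G has full column rank, W is positive definite, and the second moments of g(X_{in},θ₀), G(X_{in}), W(X_{in}) exist and are finite. Then, with probability approaching one, √n(θ̂₁ − θ₀) = η_W + ψ̃_{W,0} + n^{−1/2}(ψ̃_{W,1} + q̃_W + B̃_W(η_W + ψ̃_{W,0})) + O_p(n⁻¹), where η_W = −(G′W⁻¹G)⁻¹G′W⁻¹δ, ψ̃_{W,0} = −(G′W⁻¹G)⁻¹G′W⁻¹g̃, ψ̃_{W,1} = −(G′W⁻¹G)⁻¹(G̃′W⁻¹δ − G′W⁻¹W̃W⁻¹δ), q̃_W = −(G′W⁻¹G)⁻¹(G̃′W⁻¹g̃ − G′W⁻¹W̃W⁻¹g̃), B̃_W = −(G′W⁻¹G)⁻¹(G̃′W⁻¹G − G′W⁻¹W̃W⁻¹G + G′W⁻¹G̃). -/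

import Mathlib

open Matrix Filter MeasureTheory ProbabilityTheory

attribute [local instance] Matrix.normedAddCommGroup

noncomputable section

/-- `Z_n = O_p(a_n)`: the sequence `{Z_n / a_n}` is bounded in probability — for every
`ε > 0` there is `M > 0` with `P(‖Z_n‖ / a_n > M) < ε` for all sufficiently large `n`. -/
def IsBigOp {Ωs : Type*} [MeasurableSpace Ωs] (P : Measure Ωs)
    {E : Type*} [Norm E] (Z : ℕ → Ωs → E) (a : ℕ → ℝ) : Prop :=
  ∀ ε : ℝ, 0 < ε → ∃ M : ℝ, 0 < M ∧
    ∀ᶠ n in atTop, P {ω | M < ‖Z n ω‖ / a n} < ENNReal.ofReal ε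

section AuxGMM
variable {q k : ℕ}

variable {q k : ℕ}

def hvec (Gm : Matrix (Fin q) (Fin k) ℝ) (Wm : Matrix (Fin q) (Fin q) ℝ)
    (m : Fin q → ℝ) : Fin k → ℝ :=
  -((Gmᵀ * Wm⁻¹ * Gm)⁻¹ *ᵥ (Gmᵀ *ᵥ (Wm⁻¹ *ᵥ m)))

def tvec (Gm : Matrix (Fin q) (Fin k) ℝ) (Wm : Matrix (Fin q) (Fin q) ℝ)
    (m : Fin q → ℝ) (y : Matrix (Fin q) (Fin k) ℝ) (z : Matrix (Fin q) (Fin q) ℝ) :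
    Fin k → ℝ :=
  -((Gmᵀ * Wm⁻¹ * Gm)⁻¹ *ᵥ (yᵀ *ᵥ (Wm⁻¹ *ᵥ m) - Gmᵀ *ᵥ (Wm⁻¹ *ᵥ (z *ᵥ (Wm⁻¹ *ᵥ m)))))
  + (-((Gmᵀ * Wm⁻¹ * Gm)⁻¹ *
      (yᵀ * Wm⁻¹ * Gm - Gmᵀ * Wm⁻¹ * z * Wm⁻¹ * Gm + Gmᵀ * Wm⁻¹ * y))) *ᵥ (hvec Gm Wm m)

lemma headAA (Gm : Matrix (Fin q) (Fin k) ℝ) (Wm : Matrix (Fin q) (Fin q) ℝ)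
    (hA0 : IsUnit (Gmᵀ * Wm⁻¹ * Gm).det) (X : Fin k → ℝ) :
    Gmᵀ *ᵥ (Wm⁻¹ *ᵥ (Gm *ᵥ ((Gmᵀ * Wm⁻¹ * Gm)⁻¹ *ᵥ X))) = X := by
  rw [Matrix.mulVec_mulVec, Matrix.mulVec_mulVec, Matrix.mulVec_mulVec,
    Matrix.mul_nonsing_inv _ hA0, Matrix.one_mulVec]

lemma cancel0 (Gm : Matrix (Fin q) (Fin k) ℝ) (Wm : Matrix (Fin q) (Fin q) ℝ)
    (hA0 : IsUnit (Gmᵀ * Wm⁻¹ * Gm).det) (m : Fin q → ℝ) :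
    Gmᵀ *ᵥ (Wm⁻¹ *ᵥ (Gm *ᵥ hvec Gm Wm m)) = -(Gmᵀ *ᵥ (Wm⁻¹ *ᵥ m)) := by
  rw [hvec, Matrix.mulVec_neg, Matrix.mulVec_neg, Matrix.mulVec_neg, headAA Gm Wm hA0]

lemma cancel1 (Gm : Matrix (Fin q) (Fin k) ℝ) (Wm : Matrix (Fin q) (Fin q) ℝ)
    (hA0 : IsUnit (Gmᵀ * Wm⁻¹ * Gm).det) (m : Fin q → ℝ)
    (y : Matrix (Fin q) (Fin k) ℝ) (z : Matrix (Fin q) (Fin q) ℝ) :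
    Gmᵀ *ᵥ (Wm⁻¹ *ᵥ (y *ᵥ hvec Gm Wm m + Gm *ᵥ tvec Gm Wm m y z))
      - Gmᵀ *ᵥ ((Wm⁻¹ * z * Wm⁻¹) *ᵥ (m + Gm *ᵥ hvec Gm Wm m))
      + yᵀ *ᵥ (Wm⁻¹ *ᵥ (m + Gm *ᵥ hvec Gm Wm m)) = 0 := by
  simp only [tvec, Matrix.mulVec_add, Matrix.mulVec_sub, Matrix.mulVec_neg, Matrix.add_mulVec,
    Matrix.sub_mulVec, Matrix.neg_mulVec, ← Matrix.mulVec_mulVec]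
  simp only [headAA Gm Wm hA0]
  abel

lemma inv_expand {q : ℕ} (Wm z : Matrix (Fin q) (Fin q) ℝ) (s : ℝ)
    (hW : IsUnit Wm.det) (hWn : IsUnit (Wm + s • z).det) :
    (Wm + s • z)⁻¹ = Wm⁻¹ - s • (Wm⁻¹ * z * Wm⁻¹)
      + (s^2) • (Wm⁻¹ * z * (Wm⁻¹ * z * (Wm + s • z)⁻¹)) := by
  set Wn := Wm + s • z with hWndef
  have e1 : Wn⁻¹ = Wm⁻¹ - s • (Wm⁻¹ * z * Wn⁻¹) := by
    have h1 : Wm⁻¹ * (Wn * Wn⁻¹) = Wm⁻¹ := by rw [mul_nonsing_inv _ hWn, mul_one]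
    have h2 : Wm⁻¹ * Wm * Wn⁻¹ = Wn⁻¹ := by rw [nonsing_inv_mul _ hW, one_mul]
    calc Wn⁻¹ = Wm⁻¹ * Wm * Wn⁻¹ := h2.symm
    _ = Wm⁻¹ * (Wn - s • z) * Wn⁻¹ := by rw [hWndef]; congr 1; rw [add_sub_cancel_right]
    _ = Wm⁻¹ * (Wn * Wn⁻¹) - s • (Wm⁻¹ * z * Wn⁻¹) := by
        rw [Matrix.mul_sub, Matrix.sub_mul, Matrix.mul_assoc]
        congr 1
        rw [Matrix.mul_smul, Matrix.smul_mul, Matrix.mul_assoc]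
    _ = Wm⁻¹ - s • (Wm⁻¹ * z * Wn⁻¹) := by rw [h1]
  calc Wn⁻¹ = Wm⁻¹ - s • (Wm⁻¹ * z * Wn⁻¹) := e1
  _ = Wm⁻¹ - s • (Wm⁻¹ * z * (Wm⁻¹ - s • (Wm⁻¹ * z * Wn⁻¹))) := by conv_rhs => rw [← e1]
  _ = _ := by
      rw [Matrix.mul_sub, Matrix.mul_smul, smul_sub, smul_smul, ← sq, Matrix.mul_assoc]
      abel

def rvec (Gm : Matrix (Fin q) (Fin k) ℝ) (Wm : Matrix (Fin q) (Fin q) ℝ) (s : ℝ)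
    (m : Fin q → ℝ) (y : Matrix (Fin q) (Fin k) ℝ) (z : Matrix (Fin q) (Fin q) ℝ) :
    Fin k → ℝ :=
  (Gmᵀ *ᵥ ((Wm⁻¹ * z * (Wm⁻¹ * z * (Wm + s • z)⁻¹)) *ᵥ (m + Gm *ᵥ hvec Gm Wm m))
    - Gmᵀ *ᵥ ((Wm⁻¹ * z * Wm⁻¹) *ᵥ (y *ᵥ hvec Gm Wm m + Gm *ᵥ tvec Gm Wm m y z))
    + Gmᵀ *ᵥ (Wm⁻¹ *ᵥ (y *ᵥ tvec Gm Wm m y z))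
    - yᵀ *ᵥ ((Wm⁻¹ * z * Wm⁻¹) *ᵥ (m + Gm *ᵥ hvec Gm Wm m))
    + yᵀ *ᵥ (Wm⁻¹ *ᵥ (y *ᵥ hvec Gm Wm m + Gm *ᵥ tvec Gm Wm m y z)))
  + s • (yᵀ *ᵥ ((Wm⁻¹ * z * (Wm⁻¹ * z * (Wm + s • z)⁻¹)) *ᵥ (m + Gm *ᵥ hvec Gm Wm m))
    + Gmᵀ *ᵥ ((Wm⁻¹ * z * (Wm⁻¹ * z * (Wm + s • z)⁻¹)) *ᵥ (y *ᵥ hvec Gm Wm m + Gm *ᵥ tvec Gm Wm m y z))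
    - yᵀ *ᵥ ((Wm⁻¹ * z * Wm⁻¹) *ᵥ (y *ᵥ hvec Gm Wm m + Gm *ᵥ tvec Gm Wm m y z))
    - Gmᵀ *ᵥ ((Wm⁻¹ * z * Wm⁻¹) *ᵥ (y *ᵥ tvec Gm Wm m y z))
    + yᵀ *ᵥ (Wm⁻¹ *ᵥ (y *ᵥ tvec Gm Wm m y z)))
  + (s^2) • (yᵀ *ᵥ ((Wm⁻¹ * z * (Wm⁻¹ * z * (Wm + s • z)⁻¹)) *ᵥ (y *ᵥ hvec Gm Wm m + Gm *ᵥ tvec Gm Wm m y z))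
    + Gmᵀ *ᵥ ((Wm⁻¹ * z * (Wm⁻¹ * z * (Wm + s • z)⁻¹)) *ᵥ (y *ᵥ tvec Gm Wm m y z))
    - yᵀ *ᵥ ((Wm⁻¹ * z * Wm⁻¹) *ᵥ (y *ᵥ tvec Gm Wm m y z)))
  + (s^3) • (yᵀ *ᵥ ((Wm⁻¹ * z * (Wm⁻¹ * z * (Wm + s • z)⁻¹)) *ᵥ (y *ᵥ tvec Gm Wm m y z)))

lemma claim1 (Gm : Matrix (Fin q) (Fin k) ℝ) (Wm : Matrix (Fin q) (Fin q) ℝ)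
    (s : ℝ) (m : Fin q → ℝ) (y : Matrix (Fin q) (Fin k) ℝ) (z : Matrix (Fin q) (Fin q) ℝ)
    (hW : IsUnit Wm.det) (hWn : IsUnit (Wm + s • z).det)
    (hA0 : IsUnit (Gmᵀ * Wm⁻¹ * Gm).det) :
    (Gm + s • y)ᵀ *ᵥ ((Wm + s • z)⁻¹ *ᵥ
        (m + (Gm + s • y) *ᵥ (hvec Gm Wm m + s • tvec Gm Wm m y z)))
      = (s^2) • rvec Gm Wm s m y z := by
  rw [inv_expand Wm z s hW hWn]
  have hC0 : (Gmᵀ *ᵥ (Wm⁻¹ *ᵥ (m + Gm *ᵥ hvec Gm Wm m))) = 0 := by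
    simp only [Matrix.mulVec_add, cancel0 Gm Wm hA0 m]
    abel
  have hC1 := cancel1 Gm Wm hA0 m y z
  trans ((Gmᵀ *ᵥ (Wm⁻¹ *ᵥ (m + Gm *ᵥ hvec Gm Wm m)))
    + s • (Gmᵀ *ᵥ (Wm⁻¹ *ᵥ (y *ᵥ hvec Gm Wm m + Gm *ᵥ tvec Gm Wm m y z))
      - Gmᵀ *ᵥ ((Wm⁻¹ * z * Wm⁻¹) *ᵥ (m + Gm *ᵥ hvec Gm Wm m))
      + yᵀ *ᵥ (Wm⁻¹ *ᵥ (m + Gm *ᵥ hvec Gm Wm m)))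
    + (s^2) • rvec Gm Wm s m y z)
  · simp only [rvec, Matrix.mulVec_add, Matrix.add_mulVec, Matrix.mulVec_sub, Matrix.sub_mulVec,
      Matrix.mulVec_smul, Matrix.smul_mulVec, Matrix.transpose_add, Matrix.transpose_smul,
      smul_add, smul_sub, Matrix.mulVec_neg, Matrix.neg_mulVec]
    module
  · rw [hC0, hC1]
    simp

lemma expansion_identity (Gm : Matrix (Fin q) (Fin k) ℝ) (Wm : Matrix (Fin q) (Fin q) ℝ)
    (s : ℝ) (m : Fin q → ℝ) (y : Matrix (Fin q) (Fin k) ℝ) (z : Matrix (Fin q) (Fin q) ℝ)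
    (hW : IsUnit Wm.det) (hWn : IsUnit (Wm + s • z).det)
    (hA0 : IsUnit (Gmᵀ * Wm⁻¹ * Gm).det)
    (hAn : IsUnit ((Gm + s • y)ᵀ * (Wm + s • z)⁻¹ * (Gm + s • y)).det) :
    -(((Gm + s • y)ᵀ * (Wm + s • z)⁻¹ * (Gm + s • y))⁻¹ *ᵥ
        ((Gm + s • y)ᵀ *ᵥ ((Wm + s • z)⁻¹ *ᵥ m)))
      - (hvec Gm Wm m + s • tvec Gm Wm m y z)
    = -((s^2) • (((Gm + s • y)ᵀ * (Wm + s • z)⁻¹ * (Gm + s • y))⁻¹ *ᵥ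
        rvec Gm Wm s m y z)) := by
  set An := (Gm + s • y)ᵀ * (Wm + s • z)⁻¹ * (Gm + s • y) with hAndef
  have hinv : ∀ v : Fin k → ℝ, An⁻¹ *ᵥ (An *ᵥ v) = v := fun v => by
    rw [Matrix.mulVec_mulVec, Matrix.nonsing_inv_mul _ hAn, Matrix.one_mulVec]
  have hT : An *ᵥ (hvec Gm Wm m + s • tvec Gm Wm m y z)
      = (Gm + s • y)ᵀ *ᵥ ((Wm + s • z)⁻¹ *ᵥ
          ((Gm + s • y) *ᵥ (hvec Gm Wm m + s • tvec Gm Wm m y z))) := by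
    rw [Matrix.mulVec_mulVec, Matrix.mulVec_mulVec]
  calc -(An⁻¹ *ᵥ ((Gm + s • y)ᵀ *ᵥ ((Wm + s • z)⁻¹ *ᵥ m)))
        - (hvec Gm Wm m + s • tvec Gm Wm m y z)
      = -(An⁻¹ *ᵥ ((Gm + s • y)ᵀ *ᵥ ((Wm + s • z)⁻¹ *ᵥ m))
          + An⁻¹ *ᵥ (An *ᵥ (hvec Gm Wm m + s • tvec Gm Wm m y z))) := by rw [hinv]; abel
    _ = -(An⁻¹ *ᵥ ((Gm + s • y)ᵀ *ᵥ ((Wm + s • z)⁻¹ *ᵥ m)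
          + An *ᵥ (hvec Gm Wm m + s • tvec Gm Wm m y z))) := by conv_rhs => rw [Matrix.mulVec_add An⁻¹]
    _ = -(An⁻¹ *ᵥ ((Gm + s • y)ᵀ *ᵥ ((Wm + s • z)⁻¹ *ᵥ
          (m + (Gm + s • y) *ᵥ (hvec Gm Wm m + s • tvec Gm Wm m y z))))) := by
        rw [hT, ← Matrix.mulVec_add, ← Matrix.mulVec_add]
    _ = -(An⁻¹ *ᵥ ((s^2) • rvec Gm Wm s m y z)) := by
        rw [claim1 Gm Wm s m y z hW hWn hA0]
    _ = -((s^2) • (An⁻¹ *ᵥ rvec Gm Wm s m y z)) := by rw [Matrix.mulVec_smul]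

section CAhelpers

variable {X : Type*} [TopologicalSpace X]

lemma caMul {a b c : ℕ} {f : X → Matrix (Fin a) (Fin b) ℝ} {g : X → Matrix (Fin b) (Fin c) ℝ}
    {x : X} (hf : ContinuousAt f x) (hg : ContinuousAt g x) :
    ContinuousAt (fun x => f x * g x) x :=
  ((continuous_fst.matrix_mul continuous_snd).continuousAt).comp (hf.prodMk hg)

lemma caMulVec {a b : ℕ} {f : X → Matrix (Fin a) (Fin b) ℝ} {v : X → Fin b → ℝ}
    {x : X} (hf : ContinuousAt f x) (hv : ContinuousAt v x) :
    ContinuousAt (fun x => f x *ᵥ v x) x :=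
  ((continuous_fst.matrix_mulVec continuous_snd).continuousAt).comp (hf.prodMk hv)

lemma caTrans {a b : ℕ} {f : X → Matrix (Fin a) (Fin b) ℝ}
    {x : X} (hf : ContinuousAt f x) : ContinuousAt (fun x => (f x)ᵀ) x :=
  ((continuous_id.matrix_transpose).continuousAt).comp hf

lemma caInv {a : ℕ} {f : X → Matrix (Fin a) (Fin a) ℝ} {x : X}
    (hf : ContinuousAt f x) (hdet : (f x).det ≠ 0) :
    ContinuousAt (fun x => (f x)⁻¹) x := by
  refine (continuousAt_matrix_inv _ ?_).comp hf
  have : ContinuousAt Inv.inv (f x).det := continuousAt_inv₀ hdet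
  simpa [Ring.inverse_eq_inv'] using this

end CAhelpers
lemma exists_pos_forall_ne {E : Type*} [TopologicalSpace E] [T2Space E] {K : Set E}
    (hK : IsCompact K) {s₁ : ℝ} (hs₁ : 0 < s₁) {f : ℝ × E → ℝ}
    (hf : ContinuousOn f (Set.Icc 0 s₁ ×ˢ K))
    (h0 : ∀ x ∈ K, f (0, x) ≠ 0) :
    ∃ s₀ : ℝ, 0 < s₀ ∧ s₀ ≤ s₁ ∧ ∀ s ∈ Set.Icc (0:ℝ) s₀, ∀ x ∈ K, f (s, x) ≠ 0 := by
  set S : Set (ℝ × E) := Set.Icc 0 s₁ ×ˢ K with hS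
  have hScomp : IsCompact S := isCompact_Icc.prod hK
  have hSclosed : IsClosed S := isCompact_Icc.isClosed.prod hK.isClosed
  set Z : Set (ℝ × E) := S ∩ f ⁻¹' {0} with hZ
  have hZclosed : IsClosed Z := hf.preimage_isClosed_of_isClosed hSclosed isClosed_singleton
  have hZcomp : IsCompact Z := hScomp.of_isClosed_subset hZclosed Set.inter_subset_left
  rcases Z.eq_empty_or_nonempty with hemp | hne
  · refine ⟨s₁, hs₁, le_refl _, fun s hs x hx hfx => ?_⟩
    have : (s, x) ∈ Z := ⟨⟨⟨hs.1, hs.2⟩, hx⟩, hfx⟩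
    rw [hemp] at this
    exact this
  · obtain ⟨⟨a, b⟩, hpZ, hpmin⟩ := hZcomp.exists_isMinOn hne continuous_fst.continuousOn
    obtain ⟨⟨⟨ha0, ha1⟩, hbK⟩, hfz⟩ := hpZ
    simp only [Set.mem_preimage, Set.mem_singleton_iff] at hfz
    have hapos : 0 < a := by
      rcases lt_or_eq_of_le ha0 with h | h
      · exact h
      · exact absurd hfz (by simp only [] at h ⊢; rw [show a = 0 from h.symm]; exact h0 b hbK)
    refine ⟨a / 2, by positivity, le_trans (by linarith) ha1, fun s hs x hx hfx => ?_⟩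
    have hmem : (s, x) ∈ Z := ⟨⟨⟨hs.1, le_trans hs.2 (le_trans (by linarith) ha1)⟩, hx⟩, hfx⟩
    have hle : a ≤ s := hpmin hmem
    linarith [hs.2]

lemma caDet {X : Type*} [TopologicalSpace X] {a : ℕ} {f : X → Matrix (Fin a) (Fin a) ℝ} {x : X}
    (hf : ContinuousAt f x) : ContinuousAt (fun x => (f x).det) x :=
  ((continuous_id.matrix_det).continuousAt).comp hf

lemma key (Gm : Matrix (Fin q) (Fin k) ℝ) (Wm : Matrix (Fin q) (Fin q) ℝ) (δ : Fin q → ℝ)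
    (hW : IsUnit Wm.det) (hA0 : IsUnit (Gmᵀ * Wm⁻¹ * Gm).det) (M : ℝ) (hM : 0 < M) :
    ∃ s₀ C : ℝ, 0 < s₀ ∧ 0 ≤ C ∧
      ∀ s (m : Fin q → ℝ) (y : Matrix (Fin q) (Fin k) ℝ) (z : Matrix (Fin q) (Fin q) ℝ),
        0 < s → s ≤ s₀ → ‖m - δ‖ ≤ M → ‖y‖ ≤ M → ‖z‖ ≤ M →
        IsUnit (Wm + s • z).det ∧
        IsUnit ((Gm + s • y)ᵀ * (Wm + s • z)⁻¹ * (Gm + s • y)).det ∧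
        ‖-(((Gm + s • y)ᵀ * (Wm + s • z)⁻¹ * (Gm + s • y))⁻¹ *ᵥ
              ((Gm + s • y)ᵀ *ᵥ ((Wm + s • z)⁻¹ *ᵥ m)))
            - (hvec Gm Wm m + s • tvec Gm Wm m y z)‖ ≤ C * s ^ 2 := by
  haveI : ProperSpace (Matrix (Fin q) (Fin q) ℝ) :=
    inferInstanceAs (ProperSpace (Fin q → Fin q → ℝ))
  haveI : ProperSpace (Matrix (Fin q) (Fin k) ℝ) :=
    inferInstanceAs (ProperSpace (Fin q → Fin k → ℝ))
  have hWdet : Wm.det ≠ 0 := hW.ne_zero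
  have hA0det : (Gmᵀ * Wm⁻¹ * Gm).det ≠ 0 := hA0.ne_zero
  -- Stage 1 : invertibility of `Wm + s • z`
  obtain ⟨s₁, hs₁pos, hs₁le, hP1⟩ := exists_pos_forall_ne
    (isCompact_closedBall (0 : Matrix (Fin q) (Fin q) ℝ) M) one_pos
    (f := fun p : ℝ × Matrix (Fin q) (Fin q) ℝ => (Wm + p.1 • p.2).det)
    ((continuous_const.add (continuous_fst.smul continuous_snd)).matrix_det.continuousOn)
    (fun z _ => by simpa using hWdet)
  -- Stage 2 : invertibility of `An`
  obtain ⟨s₀, hs₀pos, hs₀le, hP2⟩ := exists_pos_forall_ne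
    (K := Metric.closedBall (0 : Matrix (Fin q) (Fin k) ℝ) M ×ˢ
      Metric.closedBall (0 : Matrix (Fin q) (Fin q) ℝ) M)
    ((isCompact_closedBall _ _).prod (isCompact_closedBall _ _)) hs₁pos
    (f := fun p : ℝ × (Matrix (Fin q) (Fin k) ℝ × Matrix (Fin q) (Fin q) ℝ) =>
      ((Gm + p.1 • p.2.1)ᵀ * (Wm + p.1 • p.2.2)⁻¹ * (Gm + p.1 • p.2.1)).det)
    (by
      intro p hp
      apply ContinuousAt.continuousWithinAt
      have hdet : (Wm + p.1 • p.2.2).det ≠ 0 := hP1 p.1 hp.1 p.2.2 hp.2.2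
      have c1 : ContinuousAt (fun p : ℝ × (Matrix (Fin q) (Fin k) ℝ × Matrix (Fin q) (Fin q) ℝ)
        => p.1) p := continuous_fst.continuousAt
      have cy : ContinuousAt (fun p : ℝ × (Matrix (Fin q) (Fin k) ℝ × Matrix (Fin q) (Fin q) ℝ)
        => p.2.1) p := (continuous_fst.comp continuous_snd).continuousAt
      have cz : ContinuousAt (fun p : ℝ × (Matrix (Fin q) (Fin k) ℝ × Matrix (Fin q) (Fin q) ℝ)
        => p.2.2) p := (continuous_snd.comp continuous_snd).continuousAt
      have cGn : ContinuousAt (fun p : ℝ × (Matrix (Fin q) (Fin k) ℝ × Matrix (Fin q) (Fin q) ℝ)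
        => Gm + p.1 • p.2.1) p := continuousAt_const.add (c1.smul cy)
      have cWn : ContinuousAt (fun p : ℝ × (Matrix (Fin q) (Fin k) ℝ × Matrix (Fin q) (Fin q) ℝ)
        => Wm + p.1 • p.2.2) p := continuousAt_const.add (c1.smul cz)
      have cWninv := caInv cWn hdet
      exact caDet (caMul (caMul (caTrans cGn) cWninv) cGn))
    (fun x _ => by simpa using hA0det)
  -- Stage 3 : bound on the compact set
  set S : Set (ℝ × ((Fin q → ℝ) × (Matrix (Fin q) (Fin k) ℝ × Matrix (Fin q) (Fin q) ℝ))) :=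
    Set.Icc 0 s₀ ×ˢ (Metric.closedBall δ M ×ˢ
      (Metric.closedBall 0 M ×ˢ Metric.closedBall 0 M)) with hSdef
  have hScomp : IsCompact S := isCompact_Icc.prod ((isCompact_closedBall _ _).prod
    ((isCompact_closedBall _ _).prod (isCompact_closedBall _ _)))
  set Φ : ℝ × ((Fin q → ℝ) × (Matrix (Fin q) (Fin k) ℝ × Matrix (Fin q) (Fin q) ℝ)) →
      (Fin k → ℝ) := fun p =>
    ((Gm + p.1 • p.2.2.1)ᵀ * (Wm + p.1 • p.2.2.2)⁻¹ * (Gm + p.1 • p.2.2.1))⁻¹ *ᵥ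
      rvec Gm Wm p.1 p.2.1 p.2.2.1 p.2.2.2 with hΦdef
  have hΦcont : ContinuousOn Φ S := by
    intro p hp
    apply ContinuousAt.continuousWithinAt
    have hpIcc1 : p.1 ∈ Set.Icc (0:ℝ) s₁ := ⟨hp.1.1, le_trans hp.1.2 hs₀le⟩
    have hdet1 : (Wm + p.1 • p.2.2.2).det ≠ 0 := hP1 p.1 hpIcc1 p.2.2.2 hp.2.2.2
    have hdet2 : ((Gm + p.1 • p.2.2.1)ᵀ * (Wm + p.1 • p.2.2.2)⁻¹ * (Gm + p.1 • p.2.2.1)).det ≠ 0 :=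
      hP2 p.1 hp.1 (p.2.2.1, p.2.2.2) ⟨hp.2.2.1, hp.2.2.2⟩
    have c1 : ContinuousAt (fun p : ℝ × ((Fin q → ℝ) ×
        (Matrix (Fin q) (Fin k) ℝ × Matrix (Fin q) (Fin q) ℝ)) => p.1) p :=
      continuous_fst.continuousAt
    have cm : ContinuousAt (fun p : ℝ × ((Fin q → ℝ) ×
        (Matrix (Fin q) (Fin k) ℝ × Matrix (Fin q) (Fin q) ℝ)) => p.2.1) p :=
      (continuous_fst.comp continuous_snd).continuousAt
    have cy : ContinuousAt (fun p : ℝ × ((Fin q → ℝ) ×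
        (Matrix (Fin q) (Fin k) ℝ × Matrix (Fin q) (Fin q) ℝ)) => p.2.2.1) p :=
      (continuous_fst.comp (continuous_snd.comp continuous_snd)).continuousAt
    have cz : ContinuousAt (fun p : ℝ × ((Fin q → ℝ) ×
        (Matrix (Fin q) (Fin k) ℝ × Matrix (Fin q) (Fin q) ℝ)) => p.2.2.2) p :=
      (continuous_snd.comp (continuous_snd.comp continuous_snd)).continuousAt
    have cGn : ContinuousAt (fun p : ℝ × ((Fin q → ℝ) ×
        (Matrix (Fin q) (Fin k) ℝ × Matrix (Fin q) (Fin q) ℝ)) => Gm + p.1 • p.2.2.1) p :=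
      continuousAt_const.add (c1.smul cy)
    have cWn : ContinuousAt (fun p : ℝ × ((Fin q → ℝ) ×
        (Matrix (Fin q) (Fin k) ℝ × Matrix (Fin q) (Fin q) ℝ)) => Wm + p.1 • p.2.2.2) p :=
      continuousAt_const.add (c1.smul cz)
    have cWninv := caInv cWn hdet1
    have cAninv := caInv (caMul (caMul (caTrans cGn) cWninv) cGn) hdet2
    have chv : ContinuousAt (fun p : ℝ × ((Fin q → ℝ) ×
        (Matrix (Fin q) (Fin k) ℝ × Matrix (Fin q) (Fin q) ℝ)) => hvec Gm Wm p.2.1) p := by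
      unfold hvec
      exact (caMulVec continuousAt_const (caMulVec continuousAt_const
        (caMulVec continuousAt_const cm))).neg
    have ctv : ContinuousAt (fun p : ℝ × ((Fin q → ℝ) ×
        (Matrix (Fin q) (Fin k) ℝ × Matrix (Fin q) (Fin q) ℝ)) =>
        tvec Gm Wm p.2.1 p.2.2.1 p.2.2.2) p := by
      unfold tvec
      exact ((caMulVec continuousAt_const ((caMulVec (caTrans cy) (caMulVec continuousAt_const cm)).sub
        (caMulVec continuousAt_const (caMulVec continuousAt_const
          (caMulVec cz (caMulVec continuousAt_const cm)))))).neg).add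
        (caMulVec ((caMul continuousAt_const
          (((caMul (caMul (caTrans cy) continuousAt_const) continuousAt_const).sub
            (caMul (caMul (caMul (caMul continuousAt_const continuousAt_const) cz)
              continuousAt_const) continuousAt_const)).add
            (caMul (caMul continuousAt_const continuousAt_const) cy))).neg) chv)
    have cK : ContinuousAt (fun p : ℝ × ((Fin q → ℝ) ×
        (Matrix (Fin q) (Fin k) ℝ × Matrix (Fin q) (Fin q) ℝ)) =>
        Wm⁻¹ * p.2.2.2 * (Wm⁻¹ * p.2.2.2 * (Wm + p.1 • p.2.2.2)⁻¹)) p :=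
      caMul (caMul continuousAt_const cz) (caMul (caMul continuousAt_const cz) cWninv)
    have cJ : ContinuousAt (fun p : ℝ × ((Fin q → ℝ) ×
        (Matrix (Fin q) (Fin k) ℝ × Matrix (Fin q) (Fin q) ℝ)) =>
        Wm⁻¹ * p.2.2.2 * Wm⁻¹) p :=
      caMul (caMul continuousAt_const cz) continuousAt_const
    have cU0 : ContinuousAt (fun p : ℝ × ((Fin q → ℝ) ×
        (Matrix (Fin q) (Fin k) ℝ × Matrix (Fin q) (Fin q) ℝ)) =>
        p.2.1 + Gm *ᵥ hvec Gm Wm p.2.1) p := cm.add (caMulVec continuousAt_const chv)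
    have cU1 : ContinuousAt (fun p : ℝ × ((Fin q → ℝ) ×
        (Matrix (Fin q) (Fin k) ℝ × Matrix (Fin q) (Fin q) ℝ)) =>
        p.2.2.1 *ᵥ hvec Gm Wm p.2.1 + Gm *ᵥ tvec Gm Wm p.2.1 p.2.2.1 p.2.2.2) p :=
      (caMulVec cy chv).add (caMulVec continuousAt_const ctv)
    have cU2 : ContinuousAt (fun p : ℝ × ((Fin q → ℝ) ×
        (Matrix (Fin q) (Fin k) ℝ × Matrix (Fin q) (Fin q) ℝ)) =>
        p.2.2.1 *ᵥ tvec Gm Wm p.2.1 p.2.2.1 p.2.2.2) p := caMulVec cy ctv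
    have crv : ContinuousAt (fun p : ℝ × ((Fin q → ℝ) ×
        (Matrix (Fin q) (Fin k) ℝ × Matrix (Fin q) (Fin q) ℝ)) =>
        rvec Gm Wm p.1 p.2.1 p.2.2.1 p.2.2.2) p := by
      unfold rvec
      exact (((((((caMulVec continuousAt_const (caMulVec cK cU0)).sub
          (caMulVec continuousAt_const (caMulVec cJ cU1))).add
          (caMulVec continuousAt_const (caMulVec continuousAt_const cU2))).sub
          (caMulVec (caTrans cy) (caMulVec cJ cU0))).add
          (caMulVec (caTrans cy) (caMulVec continuousAt_const cU1))).add
        (c1.smul (((((caMulVec (caTrans cy) (caMulVec cK cU0)).add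
          (caMulVec continuousAt_const (caMulVec cK cU1))).sub
          (caMulVec (caTrans cy) (caMulVec cJ cU1))).sub
          (caMulVec continuousAt_const (caMulVec cJ cU2))).add
          (caMulVec (caTrans cy) (caMulVec continuousAt_const cU2))))).add
        ((c1.pow 2).smul (((caMulVec (caTrans cy) (caMulVec cK cU1)).add
          (caMulVec continuousAt_const (caMulVec cK cU2))).sub
          (caMulVec (caTrans cy) (caMulVec cJ cU2))))).add
        ((c1.pow 3).smul (caMulVec (caTrans cy) (caMulVec cK cU2)))
    exact caMulVec cAninv crv
  obtain ⟨C, hC⟩ := hScomp.exists_bound_of_continuousOn hΦcont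
  refine ⟨s₀, max C 0, hs₀pos, le_max_right _ _, ?_⟩
  intro s m y z hs0 hss hm hy hz
  have hzK : z ∈ Metric.closedBall (0 : Matrix (Fin q) (Fin q) ℝ) M :=
    mem_closedBall_zero_iff.mpr hz
  have hyK : y ∈ Metric.closedBall (0 : Matrix (Fin q) (Fin k) ℝ) M :=
    mem_closedBall_zero_iff.mpr hy
  have hmK : m ∈ Metric.closedBall δ M := (mem_closedBall_iff_norm.mpr hm)
  have h1 : (Wm + s • z).det ≠ 0 := hP1 s ⟨hs0.le, le_trans hss hs₀le⟩ z hzK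
  have h2 : ((Gm + s • y)ᵀ * (Wm + s • z)⁻¹ * (Gm + s • y)).det ≠ 0 :=
    hP2 s ⟨hs0.le, hss⟩ (y, z) ⟨hyK, hzK⟩
  have h1u : IsUnit (Wm + s • z).det := isUnit_iff_ne_zero.2 h1
  have h2u : IsUnit ((Gm + s • y)ᵀ * (Wm + s • z)⁻¹ * (Gm + s • y)).det :=
    isUnit_iff_ne_zero.2 h2
  refine ⟨h1u, h2u, ?_⟩
  rw [expansion_identity Gm Wm s m y z hW h1u hA0 h2u]
  have hmem : (s, (m, (y, z))) ∈ S := ⟨⟨hs0.le, hss⟩, hmK, hyK, hzK⟩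
  have hbound := hC _ hmem
  rw [norm_neg, norm_smul, Real.norm_eq_abs]
  have habs : |s ^ 2| = s ^ 2 := abs_of_nonneg (sq_nonneg s)
  rw [habs, mul_comm]
  exact mul_le_mul_of_nonneg_right (le_trans hbound (le_max_left _ _)) (sq_nonneg s)

end AuxGMM


lemma sum_mulVec' {ι : Type*} {a b : ℕ} (s : Finset ι) (f : ι → Matrix (Fin a) (Fin b) ℝ)
    (v : Fin b → ℝ) : (∑ i ∈ s, f i) *ᵥ v = ∑ i ∈ s, f i *ᵥ v := by
  ext r
  simp only [Matrix.mulVec, dotProduct, Matrix.sum_apply, Finset.sum_apply, Finset.sum_mul]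
  rw [Finset.sum_comm]

lemma A0_isUnit {q k : ℕ} (Gm : Matrix (Fin q) (Fin k) ℝ) (Wm : Matrix (Fin q) (Fin q) ℝ)
    (hGrank : Gm.rank = k) (hWpd : Wm.PosDef) : IsUnit (Gmᵀ * Wm⁻¹ * Gm).det := by
  have hWinv : Wm⁻¹.PosDef := hWpd.inv
  have hinj : Function.Injective Gm.mulVec := by
    have hrn := LinearMap.finrank_range_add_finrank_ker Gm.mulVecLin
    rw [Module.finrank_fin_fun] at hrn
    have hrk : Module.finrank ℝ (LinearMap.range Gm.mulVecLin) = k := hGrank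
    have hker : Module.finrank ℝ (LinearMap.ker Gm.mulVecLin) = 0 := by omega
    have : LinearMap.ker Gm.mulVecLin = ⊥ := Submodule.finrank_eq_zero.mp hker
    have := LinearMap.ker_eq_bot.mp this
    exact this
  have hinjA : Function.Injective (Gmᵀ * Wm⁻¹ * Gm).mulVec := by
    have hzero : ∀ x : Fin k → ℝ, (Gmᵀ * Wm⁻¹ * Gm) *ᵥ x = 0 → x = 0 := by
      intro x hx
      by_contra hne
      have hGx : Gm *ᵥ x ≠ 0 := by
        intro h0
        exact hne (hinj (h0.trans (Matrix.mulVec_zero Gm).symm))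
      have hpos := hWinv.dotProduct_mulVec_pos hGx
      have hdot : x ⬝ᵥ ((Gmᵀ * Wm⁻¹ * Gm) *ᵥ x) = (Gm *ᵥ x) ⬝ᵥ (Wm⁻¹ *ᵥ (Gm *ᵥ x)) := by
        rw [← Matrix.mulVec_mulVec, ← Matrix.mulVec_mulVec, Matrix.dotProduct_mulVec,
          Matrix.vecMul_transpose]
      rw [hx] at hdot
      simp only [dotProduct_zero] at hdot
      rw [star_trivial] at hpos
      rw [← hdot] at hpos
      exact lt_irrefl _ hpos
    intro x1 x2 h12
    have : (Gmᵀ * Wm⁻¹ * Gm) *ᵥ (x1 - x2) = 0 := by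
      rw [Matrix.mulVec_sub, h12, sub_self]
    have := hzero _ this
    exact sub_eq_zero.mp this
  exact (Matrix.isUnit_iff_isUnit_det _).mp (Matrix.mulVec_injective_iff_isUnit.mp hinjA)

/-- **Stochastic expansion of the one-step GMM estimator under local misspecification
(Theorem 2).** For a triangular array `{X_{in}}`, i.i.d. within each row, with a linear
moment function `g(x,θ) = a(x) + B(x)θ` satisfying the locally misspecified moment
condition `E[g(X_{in},θ₀)] = δ/√n`, if `g̃ = O_p(1)`, `G̃ = O_p(1)`, `W̃ = O_p(1)`, the
one-step first-order condition holds with probability approaching one, `G` has full column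
rank, `W` is positive definite, and second moments are finite, then w.p.a.1
`√n(θ̂₁ − θ₀) = η_W + ψ̃_{W,0} + n^{−1/2}(ψ̃_{W,1} + q̃_W + B̃_W(η_W + ψ̃_{W,0})) + O_p(n⁻¹)`. -/
theorem onestep_gmm_stochastic_expansion_local_misspecification
    {Ωs : Type*} [MeasurableSpace Ωs] (P : Measure Ωs) [IsProbabilityMeasure P]
    {dx q k : ℕ} (hqk : k < q)
    -- the triangular array of observations
    (X : ℕ → ℕ → Ωs → (Fin dx → ℝ)) (hXmeas : ∀ n i, Measurable (X n i))
    -- the linear moment function, its Jacobian, and the weight function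
    (a : (Fin dx → ℝ) → (Fin q → ℝ)) (ha : Measurable a)
    (B : (Fin dx → ℝ) → Matrix (Fin q) (Fin k) ℝ)
    (hB : ∀ r c, Measurable fun x => B x r c)
    (Wf : (Fin dx → ℝ) → Matrix (Fin q) (Fin q) ℝ)
    (hWf : ∀ r c, Measurable fun x => Wf x r c)
    (g : (Fin dx → ℝ) → (Fin k → ℝ) → (Fin q → ℝ))
    (hg : ∀ x θ, g x θ = a x + B x *ᵥ θ)
    -- i.i.d. within each row
    (hindep : ∀ n : ℕ, iIndepFun
      (fun i : Fin n => X n i.1) P)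
    (hident : ∀ n : ℕ, ∀ i j : ℕ, i < n → j < n → IdentDistrib (X n i) (X n j) P P)
    -- local misspecification: `E[g(X_{in},θ₀)] = δ/√n`, with fixed nonzero `δ`
    (θ0 : Fin k → ℝ) (δ : Fin q → ℝ) (hδ : δ ≠ 0)
    (hlocal : ∀ n : ℕ, 0 < n → ∀ i : ℕ, i < n → ∀ r : Fin q,
      ∫ ω, g (X n i ω) θ0 r ∂P = δ r / Real.sqrt n)
    -- the population Jacobian and weight matrix, not depending on `n`
    (Gm : Matrix (Fin q) (Fin k) ℝ)
    (hGm : ∀ n : ℕ, 0 < n → ∀ i : ℕ, i < n → ∀ r c,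
      Gm r c = ∫ ω, B (X n i ω) r c ∂P)
    (Wm : Matrix (Fin q) (Fin q) ℝ)
    (hWm : ∀ n : ℕ, 0 < n → ∀ i : ℕ, i < n → ∀ r c,
      Wm r c = ∫ ω, Wf (X n i ω) r c ∂P)
    -- `G` full column rank; `W` positive definite
    (hGrank : Gm.rank = k) (hWpd : Wm.PosDef)
    -- finite second moments of `g(X_{in},θ₀)`, `G(X_{in})` and `W(X_{in})`
    (hmom_g : ∀ n : ℕ, 0 < n → ∀ i : ℕ, i < n →
      Integrable (fun ω => ‖g (X n i ω) θ0‖ ^ 2) P)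
    (hmom_G : ∀ n : ℕ, 0 < n → ∀ i : ℕ, i < n →
      Integrable (fun ω => ‖B (X n i ω)‖ ^ 2) P)
    (hmom_W : ∀ n : ℕ, 0 < n → ∀ i : ℕ, i < n →
      Integrable (fun ω => ‖Wf (X n i ω)‖ ^ 2) P)
    -- sample moments
    (gn : ℕ → (Fin k → ℝ) → Ωs → (Fin q → ℝ))
    (hgn : ∀ n θ ω, gn n θ ω = (n : ℝ)⁻¹ • ∑ i ∈ Finset.range n, g (X n i ω) θ)
    (Gn : ℕ → Ωs → Matrix (Fin q) (Fin k) ℝ)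
    (hGn : ∀ n ω, Gn n ω = (n : ℝ)⁻¹ • ∑ i ∈ Finset.range n, B (X n i ω))
    (Wn : ℕ → Ωs → Matrix (Fin q) (Fin q) ℝ)
    (hWn : ∀ n ω, Wn n ω = (n : ℝ)⁻¹ • ∑ i ∈ Finset.range n, Wf (X n i ω))
    -- the centered processes `g̃`, `G̃`, `W̃`, each `O_p(1)`
    (gt : ℕ → Ωs → (Fin q → ℝ))
    (hgt : ∀ n ω, gt n ω = Real.sqrt n • (gn n θ0 ω - (Real.sqrt n)⁻¹ • δ))
    (Gt : ℕ → Ωs → Matrix (Fin q) (Fin k) ℝ)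
    (hGt : ∀ n ω, Gt n ω = Real.sqrt n • (Gn n ω - Gm))
    (Wt : ℕ → Ωs → Matrix (Fin q) (Fin q) ℝ)
    (hWt : ∀ n ω, Wt n ω = Real.sqrt n • (Wn n ω - Wm))
    (hgtOp : IsBigOp P gt fun _ => 1)
    (hGtOp : IsBigOp P Gt fun _ => 1)
    (hWtOp : IsBigOp P Wt fun _ => 1)
    -- the one-step GMM estimator: a measurable minimizer of the one-step criterion
    (θh1 : ℕ → Ωs → (Fin k → ℝ)) (hθh1meas : ∀ n, Measurable (θh1 n))
    (hθh1min : ∀ n ω θ,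
      gn n (θh1 n ω) ω ⬝ᵥ ((Wn n ω)⁻¹ *ᵥ gn n (θh1 n ω) ω)
        ≤ gn n θ ω ⬝ᵥ ((Wn n ω)⁻¹ *ᵥ gn n θ ω))
    -- the first-order condition holds with probability approaching one
    (hFOC : Tendsto
      (fun n => P {ω | (Gn n ω)ᵀ *ᵥ ((Wn n ω)⁻¹ *ᵥ gn n (θh1 n ω) ω) ≠ 0})
      atTop (nhds 0))
    -- the terms of the expansion
    (ηW : Fin k → ℝ)
    (hηW : ηW = -((Gmᵀ * Wm⁻¹ * Gm)⁻¹ *ᵥ (Gmᵀ *ᵥ (Wm⁻¹ *ᵥ δ))))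
    (ψW0 : ℕ → Ωs → (Fin k → ℝ))
    (hψW0 : ∀ n ω, ψW0 n ω = -((Gmᵀ * Wm⁻¹ * Gm)⁻¹ *ᵥ (Gmᵀ *ᵥ (Wm⁻¹ *ᵥ gt n ω))))
    (ψW1 : ℕ → Ωs → (Fin k → ℝ))
    (hψW1 : ∀ n ω, ψW1 n ω = -((Gmᵀ * Wm⁻¹ * Gm)⁻¹ *ᵥ
      ((Gt n ω)ᵀ *ᵥ (Wm⁻¹ *ᵥ δ) - Gmᵀ *ᵥ (Wm⁻¹ *ᵥ (Wt n ω *ᵥ (Wm⁻¹ *ᵥ δ))))))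
    (qW : ℕ → Ωs → (Fin k → ℝ))
    (hqW : ∀ n ω, qW n ω = -((Gmᵀ * Wm⁻¹ * Gm)⁻¹ *ᵥ
      ((Gt n ω)ᵀ *ᵥ (Wm⁻¹ *ᵥ gt n ω)
        - Gmᵀ *ᵥ (Wm⁻¹ *ᵥ (Wt n ω *ᵥ (Wm⁻¹ *ᵥ gt n ω))))))
    (BW : ℕ → Ωs → Matrix (Fin k) (Fin k) ℝ)
    (hBW : ∀ n ω, BW n ω = -((Gmᵀ * Wm⁻¹ * Gm)⁻¹ *
      ((Gt n ω)ᵀ * Wm⁻¹ * Gm - Gmᵀ * Wm⁻¹ * Wt n ω * Wm⁻¹ * Gm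
        + Gmᵀ * Wm⁻¹ * Gt n ω))) :
    -- conclusion: the remainder of the stochastic expansion is `O_p(n⁻¹)`
    IsBigOp P
      (fun n ω =>
        Real.sqrt n • (θh1 n ω - θ0) - ηW - ψW0 n ω
          - (Real.sqrt n)⁻¹ • (ψW1 n ω + qW n ω + BW n ω *ᵥ (ηW + ψW0 n ω)))
      (fun n => (n : ℝ)⁻¹) := by
  classical
  intro ε hε
  have hε4 : 0 < ε / 4 := by linarith
  obtain ⟨M₁, hM₁, hev1⟩ := hgtOp (ε/4) hε4
  obtain ⟨M₂, hM₂, hev2⟩ := hGtOp (ε/4) hε4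
  obtain ⟨M₃, hM₃, hev3⟩ := hWtOp (ε/4) hε4
  set M : ℝ := max M₁ (max M₂ M₃) with hMdef
  have hM : 0 < M := lt_of_lt_of_le hM₁ (le_max_left _ _)
  have hWu : IsUnit Wm.det := isUnit_iff_ne_zero.2 (ne_of_gt hWpd.det_pos)
  have hA0u : IsUnit (Gmᵀ * Wm⁻¹ * Gm).det := A0_isUnit Gm Wm hGrank hWpd
  obtain ⟨s₀, C, hs₀, hCnn, hkey⟩ := key Gm Wm δ hWu hA0u M hM
  refine ⟨C + 1, by linarith, ?_⟩
  have hev4 : ∀ᶠ n in atTop,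
      P {ω | (Gn n ω)ᵀ *ᵥ ((Wn n ω)⁻¹ *ᵥ gn n (θh1 n ω) ω) ≠ 0} < ENNReal.ofReal (ε/4) :=
    hFOC.eventually_lt_const (ENNReal.ofReal_pos.mpr hε4)
  have hev5 : ∀ᶠ n : ℕ in atTop, (Real.sqrt n)⁻¹ ≤ s₀ := by
    filter_upwards [eventually_ge_atTop (⌈(s₀⁻¹)^2⌉₊)] with n hn
    have h1 : (s₀⁻¹)^2 ≤ (n:ℝ) := le_trans (Nat.le_ceil _) (by exact_mod_cast hn)
    have h2 : s₀⁻¹ ≤ Real.sqrt n := by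
      rw [show s₀⁻¹ = Real.sqrt ((s₀⁻¹)^2) from (Real.sqrt_sq (by positivity)).symm]
      exact Real.sqrt_le_sqrt h1
    calc (Real.sqrt n)⁻¹ ≤ (s₀⁻¹)⁻¹ := by
          exact inv_anti₀ (by positivity) h2
      _ = s₀ := inv_inv s₀
  filter_upwards [hev1, hev2, hev3, hev4, hev5, eventually_ge_atTop 1]
    with n h1 h2 h3 h4 h5 hn1
  have hnpos : 0 < (n:ℝ) := by exact_mod_cast hn1
  have hsqpos : 0 < Real.sqrt n := Real.sqrt_pos.mpr hnpos
  set s : ℝ := (Real.sqrt n)⁻¹ with hsdef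
  have hspos : 0 < s := inv_pos.mpr hsqpos
  have hsmul : s * Real.sqrt n = 1 := inv_mul_cancel₀ hsqpos.ne'
  have hsmul' : Real.sqrt n * s = 1 := mul_inv_cancel₀ hsqpos.ne'
  have hsub : {ω | C + 1 <
      ‖Real.sqrt n • (θh1 n ω - θ0) - ηW - ψW0 n ω
        - s • (ψW1 n ω + qW n ω + BW n ω *ᵥ (ηW + ψW0 n ω))‖ / (n:ℝ)⁻¹} ⊆
      {ω | M₁ < ‖gt n ω‖ / 1} ∪ ({ω | M₂ < ‖Gt n ω‖ / 1} ∪ ({ω | M₃ < ‖Wt n ω‖ / 1} ∪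
        {ω | (Gn n ω)ᵀ *ᵥ ((Wn n ω)⁻¹ *ᵥ gn n (θh1 n ω) ω) ≠ 0})) := by
    intro ω hω
    simp only [Set.mem_setOf_eq] at hω
    by_contra hnot
    simp only [Set.mem_union, Set.mem_setOf_eq, not_or, not_lt, ne_eq, not_not] at hnot
    obtain ⟨hg1, hg2, hg3, hg4⟩ := hnot
    have hgtle : ‖gt n ω‖ ≤ M := by
      calc ‖gt n ω‖ = ‖gt n ω‖ / 1 := (div_one _).symm
        _ ≤ M₁ := hg1
        _ ≤ M := le_max_left _ _
    have hGtle : ‖Gt n ω‖ ≤ M := by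
      calc ‖Gt n ω‖ = ‖Gt n ω‖ / 1 := (div_one _).symm
        _ ≤ M₂ := hg2
        _ ≤ M := le_trans (le_max_left _ _) (le_max_right _ _)
    have hWtle : ‖Wt n ω‖ ≤ M := by
      calc ‖Wt n ω‖ = ‖Wt n ω‖ / 1 := (div_one _).symm
        _ ≤ M₃ := hg3
        _ ≤ M := le_trans (le_max_right _ _) (le_max_right _ _)
    have hmnorm : ‖(δ + gt n ω) - δ‖ ≤ M := by rw [add_sub_cancel_left]; exact hgtle
    obtain ⟨hWnu, hAnu, hbound⟩ :=
      hkey s (δ + gt n ω) (Gt n ω) (Wt n ω) hspos h5 hmnorm hGtle hWtle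
    -- structural relations
    have hWrel : Wn n ω = Wm + s • Wt n ω := by
      rw [hWt n ω, smul_smul, hsmul, one_smul]; abel
    have hGrel : Gn n ω = Gm + s • Gt n ω := by
      rw [hGt n ω, smul_smul, hsmul, one_smul]; abel
    have hgrel : gn n θ0 ω = s • (δ + gt n ω) := by
      rw [hgt n ω, smul_add, smul_smul, hsmul, one_smul]; abel
    have hlin : gn n (θh1 n ω) ω = gn n θ0 ω + Gn n ω *ᵥ (θh1 n ω - θ0) := by
      rw [hgn, hgn, hGn]
      have hsummand : ∀ i, g (X n i ω) (θh1 n ω)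
          = g (X n i ω) θ0 + B (X n i ω) *ᵥ (θh1 n ω - θ0) := by
        intro i; rw [hg, hg, Matrix.mulVec_sub]; abel
      rw [Finset.sum_congr rfl fun i _ => hsummand i, Finset.sum_add_distrib, smul_add,
        ← sum_mulVec', Matrix.smul_mulVec]
    have hFOC0 := hg4
    rw [hlin, hgrel, hWrel, hGrel] at hFOC0
    rw [Matrix.mulVec_add, Matrix.mulVec_add, Matrix.mulVec_mulVec, Matrix.mulVec_mulVec,
      Matrix.mulVec_mulVec] at hFOC0
    have hAninv : ∀ v : Fin k → ℝ,
        ((Gm + s • Gt n ω)ᵀ * (Wm + s • Wt n ω)⁻¹ * (Gm + s • Gt n ω))⁻¹ *ᵥ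
          (((Gm + s • Gt n ω)ᵀ * (Wm + s • Wt n ω)⁻¹ * (Gm + s • Gt n ω)) *ᵥ v) = v := by
      intro v
      rw [Matrix.mulVec_mulVec, Matrix.nonsing_inv_mul _ hAnu, Matrix.one_mulVec]
    have h' : ((Gm + s • Gt n ω)ᵀ * (Wm + s • Wt n ω)⁻¹ * (Gm + s • Gt n ω)) *ᵥ (θh1 n ω - θ0)
        = -(((Gm + s • Gt n ω)ᵀ * (Wm + s • Wt n ω)⁻¹) *ᵥ (s • (δ + gt n ω))) :=
      eq_neg_of_add_eq_zero_right hFOC0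
    have hd : θh1 n ω - θ0 = -(((Gm + s • Gt n ω)ᵀ * (Wm + s • Wt n ω)⁻¹ * (Gm + s • Gt n ω))⁻¹ *ᵥ
        (((Gm + s • Gt n ω)ᵀ * (Wm + s • Wt n ω)⁻¹) *ᵥ (s • (δ + gt n ω)))) := by
      calc θh1 n ω - θ0 = ((Gm + s • Gt n ω)ᵀ * (Wm + s • Wt n ω)⁻¹ * (Gm + s • Gt n ω))⁻¹ *ᵥ
            (((Gm + s • Gt n ω)ᵀ * (Wm + s • Wt n ω)⁻¹ * (Gm + s • Gt n ω)) *ᵥ (θh1 n ω - θ0)) :=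
          (hAninv _).symm
        _ = _ := by rw [h', Matrix.mulVec_neg]
    have hF : Real.sqrt n • (θh1 n ω - θ0)
        = -(((Gm + s • Gt n ω)ᵀ * (Wm + s • Wt n ω)⁻¹ * (Gm + s • Gt n ω))⁻¹ *ᵥ
            ((Gm + s • Gt n ω)ᵀ *ᵥ ((Wm + s • Wt n ω)⁻¹ *ᵥ (δ + gt n ω)))) := by
      rw [hd, Matrix.mulVec_smul, Matrix.mulVec_smul, smul_neg, smul_smul, hsmul', one_smul,
        ← Matrix.mulVec_mulVec]
    have hη0 : ηW + ψW0 n ω = hvec Gm Wm (δ + gt n ω) := by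
      rw [hηW, hψW0, hvec]
      simp only [Matrix.mulVec_add]
      abel
    have htv : ψW1 n ω + qW n ω + BW n ω *ᵥ (ηW + ψW0 n ω)
        = tvec Gm Wm (δ + gt n ω) (Gt n ω) (Wt n ω) := by
      rw [hη0, hψW1, hqW, hBW, tvec]
      simp only [Matrix.mulVec_add, Matrix.mulVec_sub]
      abel
    have hZeq : Real.sqrt n • (θh1 n ω - θ0) - ηW - ψW0 n ω
        - s • (ψW1 n ω + qW n ω + BW n ω *ᵥ (ηW + ψW0 n ω))
        = -(((Gm + s • Gt n ω)ᵀ * (Wm + s • Wt n ω)⁻¹ * (Gm + s • Gt n ω))⁻¹ *ᵥ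
            ((Gm + s • Gt n ω)ᵀ *ᵥ ((Wm + s • Wt n ω)⁻¹ *ᵥ (δ + gt n ω))))
          - (hvec Gm Wm (δ + gt n ω) + s • tvec Gm Wm (δ + gt n ω) (Gt n ω) (Wt n ω)) := by
      rw [hF, htv, ← hη0]
      abel
    rw [← hZeq] at hbound
    have hs2 : s ^ 2 = (n:ℝ)⁻¹ := by
      rw [hsdef, inv_pow, Real.sq_sqrt hnpos.le]
    have hfinal : ‖Real.sqrt n • (θh1 n ω - θ0) - ηW - ψW0 n ω
        - s • (ψW1 n ω + qW n ω + BW n ω *ᵥ (ηW + ψW0 n ω))‖ / (n:ℝ)⁻¹ ≤ C := by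
      rw [div_eq_mul_inv, inv_inv]
      calc ‖Real.sqrt n • (θh1 n ω - θ0) - ηW - ψW0 n ω
            - s • (ψW1 n ω + qW n ω + BW n ω *ᵥ (ηW + ψW0 n ω))‖ * n
          ≤ (C * s ^ 2) * n := mul_le_mul_of_nonneg_right hbound hnpos.le
        _ = C := by
            rw [hs2]
            field_simp
    linarith
  calc P {ω | C + 1 < ‖Real.sqrt n • (θh1 n ω - θ0) - ηW - ψW0 n ω
        - s • (ψW1 n ω + qW n ω + BW n ω *ᵥ (ηW + ψW0 n ω))‖ / (n:ℝ)⁻¹}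
      ≤ P ({ω | M₁ < ‖gt n ω‖ / 1} ∪ ({ω | M₂ < ‖Gt n ω‖ / 1} ∪ ({ω | M₃ < ‖Wt n ω‖ / 1} ∪
        {ω | (Gn n ω)ᵀ *ᵥ ((Wn n ω)⁻¹ *ᵥ gn n (θh1 n ω) ω) ≠ 0}))) := measure_mono hsub
    _ ≤ P {ω | M₁ < ‖gt n ω‖ / 1} + (P {ω | M₂ < ‖Gt n ω‖ / 1} + (P {ω | M₃ < ‖Wt n ω‖ / 1}
        + P {ω | (Gn n ω)ᵀ *ᵥ ((Wn n ω)⁻¹ *ᵥ gn n (θh1 n ω) ω) ≠ 0})) := by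
        refine le_trans (measure_union_le _ _) (add_le_add_right ?_ _)
        refine le_trans (measure_union_le _ _) (add_le_add_right ?_ _)
        exact measure_union_le _ _
    _ < ENNReal.ofReal (ε/4) + (ENNReal.ofReal (ε/4) + (ENNReal.ofReal (ε/4)
        + ENNReal.ofReal (ε/4))) :=
        ENNReal.add_lt_add h1 (ENNReal.add_lt_add h2 (ENNReal.add_lt_add h3 h4))
    _ = ENNReal.ofReal ε := by
        rw [← ENNReal.ofReal_add hε4.le hε4.le, ← ENNReal.ofReal_add hε4.le (by linarith),
          ← ENNReal.ofReal_add hε4.le (by linarith)]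
        congr 1
        ring
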